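/- Let V be a type, A : V → V → Prop, and layer : V → ℕ with layer(v) = layer(u) + 1 whenever A u v. Fix mid ∈ ℕ and s, t ∈ V with layer(s) ≤ layer(t) ≤ mid. Let w, w' : V → ℕ agree on every vertex v with layer(v) ≠ mid. If there is a unique minimum-w-weight s–t path, then there is a unique minimum-w'-weight s–t path, and it is the same path. (Re-weighting the middle layer cannot destroy min-isolation for pairs whose paths stay within one half of the block.) -/

import Mathlib

/-- `IsPath A s t l`: the nonempty list `l` is a path from `s` to `t` in the
directed graph with edge relation `A`. -/
def IsPath {V : Type*} (A : V → V → Prop) (s t : V) (l : List V) : Prop :=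
  l ≠ [] ∧ l.head? = some s ∧ l.getLast? = some t ∧ l.Chain' A

/-- The weight of a path under a vertex-weight function: the sum of the weights
of its vertices. -/
def pathWeight {V : Type*} (w : V → ℕ) (l : List V) : ℕ :=
  (l.map w).sum

lemma chain_dropLast_lt {V : Type*} (A : V → V → Prop) (layer : V → ℕ)
    (hlayer : ∀ u v, A u v → layer v = layer u + 1) :
    ∀ (l : List V), l.Chain' A → ∀ t, l.getLast? = some t →
      ∀ v ∈ l.dropLast, layer v < layer t := by
  intro l
  induction l with
  | nil => simp
  | cons a rest ih =>
    intro hch t hlast v hv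
    match rest with
    | [] => simp at hv
    | b :: rest' =>
      rw [List.Chain', List.isChain_cons_cons] at hch
      obtain ⟨hab, hch'⟩ := hch
      have hlast' : (b :: rest').getLast? = some t := by
        simpa using hlast
      have hab' : layer a < layer b := by
        rw [hlayer a b hab]; omega
      simp only [List.dropLast_cons_of_ne_nil (by simp : b :: rest' ≠ []),
        List.mem_cons] at hv
      rcases hv with rfl | hv
      · match rest' with
        | [] =>
          simp at hlast'
          subst hlast'
          exact hab'
        | c :: rest'' =>
          have hb : layer b < layer t := by
            apply ih hch' t hlast'
            simp [List.dropLast_cons_of_ne_nil]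
          omega
      · exact ih hch' t hlast' v hv

lemma key_shift {V : Type*} (A : V → V → Prop) (layer : V → ℕ)
    (hlayer : ∀ u v, A u v → layer v = layer u + 1)
    (mid : ℕ) (s t : V) (ht : layer t ≤ mid)
    (w w' : V → ℕ) (hagree : ∀ v, layer v ≠ mid → w' v = w v)
    (l : List V) (hp : IsPath A s t l) :
    pathWeight w' l + w t = pathWeight w l + w' t := by
  obtain ⟨hne, _, hlast, hch⟩ := hp
  have hl : l = l.dropLast ++ [t] := by
    conv_lhs => rw [← List.dropLast_append_getLast hne]
    rw [List.getLast?_eq_getLast hne] at hlast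
    simp at hlast
    rw [hlast]
  have hmap : l.dropLast.map w' = l.dropLast.map w := by
    apply List.map_congr_left
    intro v hv
    have := chain_dropLast_lt A layer hlayer l hch t hlast v hv
    exact hagree v (by omega)
  rw [hl]
  simp only [pathWeight, List.map_append, List.sum_append, hmap, List.map_cons,
    List.map_nil, List.sum_cons, List.sum_nil]
  ring

/-- Case 1 of the inductive step: in a layered DAG with
`layer s ≤ layer t ≤ mid`, if `w` and `w'` agree on every vertex outside layer
`mid` and there is a unique minimum-`w`-weight `s`–`t` path `l₀`, then `l₀` is
also the unique minimum-`w'`-weight `s`–`t` path. -/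
theorem stmt_15 {V : Type*} (A : V → V → Prop) (layer : V → ℕ)
    (hlayer : ∀ u v, A u v → layer v = layer u + 1)
    (mid : ℕ) (s t : V) (hst : layer s ≤ layer t) (ht : layer t ≤ mid)
    (w w' : V → ℕ)
    (hagree : ∀ v, layer v ≠ mid → w' v = w v)
    (l₀ : List V)
    (h₀ : IsPath A s t l₀ ∧ ∀ l', IsPath A s t l' →
      pathWeight w l₀ ≤ pathWeight w l')
    (huniq : ∀ l, (IsPath A s t l ∧ ∀ l', IsPath A s t l' →
      pathWeight w l ≤ pathWeight w l') → l = l₀) :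
    (IsPath A s t l₀ ∧ ∀ l', IsPath A s t l' →
      pathWeight w' l₀ ≤ pathWeight w' l') ∧
    ∀ l, (IsPath A s t l ∧ ∀ l', IsPath A s t l' →
      pathWeight w' l ≤ pathWeight w' l') → l = l₀ := by
  obtain ⟨hp₀, hmin₀⟩ := h₀
  have key := key_shift A layer hlayer mid s t ht w w' hagree
  constructor
  · refine ⟨hp₀, fun l' hl' => ?_⟩
    have k0 := key l₀ hp₀
    have k1 := key l' hl'
    have := hmin₀ l' hl'
    omega
  · intro l ⟨hpl, hminl⟩
    apply huniq
    refine ⟨hpl, fun l' hl' => ?_⟩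
    have k0 := key l hpl
    have k1 := key l' hl'
    have := hminl l' hl'
    omega
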